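/- (Expected payment equals expected virtual surplus for the discrete Myerson payment rule.) Let T be a natural number, let θ : Fin(T+1) → ℝ be strictly increasing, and let f : Fin(T+1) → ℝ satisfy f(τ) > 0 for every τ and Σ_τ f(τ) = 1. Let F(τ) = Σ_{j ≤ τ} f(j), and define the virtual value φ(τ) = θ_τ − ((1 − F(τ))/f(τ))·(θ_{τ+1} − θ_τ) for τ < T and φ(T) = θ_T. Let x : Fin(T+1) → ℝ be arbitrary, and define p(τ) = θ_τ·x(τ) − Σ_{j=1}^{τ} (θ_j − θ_{j−1})·x(j−1). Then Σ_τ f(τ)·p(τ) = Σ_τ f(τ)·x(τ)·φ(τ). -/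

import Mathlib

open Fin.NatCast in
lemma fin_Iic_sum_eq_range (n : ℕ) (f : Fin (n+1) → ℝ) (k : Fin (n+1)) :
    ∑ i ∈ Finset.Iic k, f i = ∑ i ∈ Finset.range (k.val+1), f i := by
  refine Finset.sum_nbij' (fun i ↦ (i : ℕ)) (fun i ↦ (i : Fin (n+1))) ?_ ?_ ?_ ?_ ?_ <;>
    simp only [Finset.mem_Iic, Finset.mem_range, Fin.le_def] <;> intro a ha
  · omega
  · simpa [Fin.le_def, Fin.val_cast_of_lt (by omega : a < n+1)] using (by omega : a ≤ k.val)
  · exact (Fin.cast_val_eq_self a)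
  · exact Fin.val_cast_of_lt (by omega)
  · rw [Fin.cast_val_eq_self]

open Fin.NatCast in
lemma fin_sum_univ_range (n : ℕ) (f : Fin (n+1) → ℝ) :
    ∑ i, f i = ∑ t ∈ Finset.range (n+1), f t := by
  rw [← Fin.sum_univ_eq_sum_range (fun t => f t) (n+1)]
  exact Finset.sum_congr rfl fun i _ => by rw [Fin.cast_val_eq_self]

open Fin.NatCast in
/-- expected payment equals expected virtual surplus for the
discrete Myerson payment rule. -/
theorem discrete_myerson_virtual_surplus
    (T : ℕ) (θ : Fin (T + 1) → ℝ) (hθ : StrictMono θ)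
    (f : Fin (T + 1) → ℝ) (hf : ∀ τ, 0 < f τ) (hfsum : ∑ τ, f τ = 1)
    (F : Fin (T + 1) → ℝ) (hF : ∀ τ, F τ = ∑ j ∈ Finset.Iic τ, f j)
    (φ : Fin (T + 1) → ℝ)
    (hφ : ∀ τ : Fin (T + 1), (τ : ℕ) < T →
      φ τ = θ τ - ((1 - F τ) / f τ) *
        (θ (((τ : ℕ) + 1 : ℕ) : Fin (T + 1)) - θ τ))
    (hφT : φ (Fin.last T) = θ (Fin.last T))
    (x p : Fin (T + 1) → ℝ)
    (hp : ∀ τ : Fin (T + 1),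
      p τ = θ τ * x τ -
        ∑ j ∈ Finset.range (τ : ℕ),
          (θ ((j + 1 : ℕ) : Fin (T + 1)) - θ ((j : ℕ) : Fin (T + 1))) *
            x ((j : ℕ) : Fin (T + 1))) :
    ∑ τ, f τ * p τ = ∑ τ, f τ * x τ * φ τ := by
  set g : ℕ → ℝ := fun j =>
    (θ ((j + 1 : ℕ) : Fin (T + 1)) - θ ((j : ℕ) : Fin (T + 1))) *
      x ((j : ℕ) : Fin (T + 1)) with hg
  have hgτ : ∀ τ : Fin (T + 1),
      g τ.val = (θ (((τ : ℕ) + 1 : ℕ) : Fin (T + 1)) - θ τ) * x τ := by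
    intro τ; simp only [hg]; rw [Fin.cast_val_eq_self]
  -- 1 - F τ equals the tail sum
  have htail : ∀ τ : Fin (T + 1),
      1 - F τ = ∑ t ∈ Finset.Ico (τ.val + 1) (T + 1), f ((t : ℕ) : Fin (T + 1)) := by
    intro τ
    have h1 : (1 : ℝ) = ∑ t ∈ Finset.range (T + 1), f ((t : ℕ) : Fin (T + 1)) := by
      rw [← hfsum, fin_sum_univ_range]
    have h2 : F τ = ∑ t ∈ Finset.range (τ.val + 1), f ((t : ℕ) : Fin (T + 1)) := by
      rw [hF, fin_Iic_sum_eq_range]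
    rw [h1, h2, ← Finset.sum_range_add_sum_Ico _ (by omega : τ.val + 1 ≤ T + 1)]
    ring
  -- pointwise RHS rewrite
  have hrhs : ∀ τ : Fin (T + 1),
      f τ * x τ * φ τ = f τ * (θ τ * x τ) - (1 - F τ) * g τ.val := by
    intro τ
    rcases lt_or_eq_of_le (Nat.lt_succ_iff.mp τ.isLt) with h | h
    · rw [hφ τ h, hgτ τ]
      have hfne : f τ ≠ 0 := (hf τ).ne'
      field_simp
    · have hτ : τ = Fin.last T := Fin.ext h
      have hF0 : 1 - F τ = 0 := by
        rw [hF, hτ]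
        have : Finset.Iic (Fin.last T) = Finset.univ := by ext i; simp [Fin.le_last]
        rw [this, hfsum]; ring
      rw [hF0, hτ, hφT]; ring
  rw [Finset.sum_congr rfl (fun τ _ => hrhs τ), Finset.sum_sub_distrib]
  -- LHS rewrite
  have hlhs : ∀ τ : Fin (T + 1),
      f τ * p τ = f τ * (θ τ * x τ) - f τ * ∑ j ∈ Finset.range τ.val, g j := by
    intro τ; rw [hp τ]; ring
  rw [Finset.sum_congr rfl (fun τ _ => hlhs τ), Finset.sum_sub_distrib]
  congr 1
  -- the double-sum swap
  rw [fin_sum_univ_range T (fun t => f t * ∑ j ∈ Finset.range t.val, g j),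
      fin_sum_univ_range T (fun t => (1 - F t) * g t.val)]
  have hval : ∀ t ∈ Finset.range (T + 1), ((t : Fin (T + 1)) : ℕ) = t := by
    intro t ht; exact Fin.val_cast_of_lt (Finset.mem_range.mp ht)
  calc ∑ t ∈ Finset.range (T + 1),
        f ((t : ℕ) : Fin (T+1)) * ∑ j ∈ Finset.range ((t : Fin (T+1)) : ℕ), g j
      = ∑ t ∈ Finset.range (T + 1), ∑ j ∈ Finset.range t,
          f ((t : ℕ) : Fin (T+1)) * g j := by
        refine Finset.sum_congr rfl fun t ht => ?_
        rw [hval t ht, Finset.mul_sum]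
    _ = ∑ j ∈ Finset.range (T + 1), ∑ t ∈ Finset.Ico (j + 1) (T + 1),
          f ((t : ℕ) : Fin (T+1)) * g j := by
        simp only [Finset.range_eq_Ico]
        exact (Finset.sum_Ico_Ico_comm' 0 (T + 1)
          (fun j t => f ((t : ℕ) : Fin (T+1)) * g j)).symm
    _ = ∑ j ∈ Finset.range (T + 1), (1 - F ((j : ℕ) : Fin (T+1))) * g ((j : Fin (T+1)) : ℕ) := by
        refine Finset.sum_congr rfl fun j hj => ?_
        rw [hval j hj, htail ((j : ℕ) : Fin (T+1)), hval j hj, ← Finset.sum_mul]
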